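/- Let p < 1/2 be the optimal failure probability for distinguishing D_0 from D_1 given M samples (uniform prior on b∈{0,1}). For uniformly random z ∈ {0,1}^B, any algorithm that receives M i.i.d. samples from the product distribution D_z = D_{z_1} × ... × D_{z_B} and outputs ẑ ∈ {0,1}^B satisfies Pr[ẑ = z] ≤ (1−p)^B. -/

import Mathlib

open scoped ENNReal

/-- Binomial probability: Pr[Bin(n,p) = k]. -/
noncomputable def binomP (n : ℕ) (p : ℝ) (k : ℕ) : ℝ :=
  (n.choose k : ℝ) * p ^ k * (1 - p) ^ (n - k)

/-- The pair distribution D_b on ℕ × ℕ. -/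
noncomputable def atomD (δ : ℝ) (M : ℕ) (b : Bool) (s : ℕ × ℕ) : ℝ :=
  if b then binomP (M + 1) (1 - δ) s.1 * binomP M (1 - δ) s.2
  else binomP M (1 - δ) s.1 * binomP (M + 1) (1 - δ) s.2

/-- Failure probability of an M-sample distinguishing algorithm (uniform prior). -/
noncomputable def failProb (δ : ℝ) (M : ℕ) (A : (Fin M → ℕ × ℕ) → Bool) : ℝ :=
  (1 / 2) * ∑' s : Fin M → ℕ × ℕ,
    ((if A s = true then ∏ m, atomD δ M false (s m) else 0)
      + (if A s = false then ∏ m, atomD δ M true (s m) else 0))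

/-! ### Auxiliary lemmas -/

lemma tsum_pi_prod {α : Type*} : ∀ (n : ℕ) (g : Fin n → α → ℝ≥0∞),
    (∑' s : Fin n → α, ∏ i, g i (s i)) = ∏ i, ∑' a, g i a := by
  intro n
  induction n with
  | zero =>
    intro g
    have h1 : ∀ s : Fin 0 → α, ∏ i, g i (s i) = 1 := fun s => by simp
    rw [show (fun s : Fin 0 → α => ∏ i, g i (s i)) = fun _ => 1 from funext h1]
    rw [tsum_eq_single (default : Fin 0 → α) (fun b hb => absurd (Subsingleton.elim b default) hb)]
    simp
  | succ n ih =>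
    intro g
    rw [← (Fin.consEquiv (fun _ : Fin (n+1) => α)).tsum_eq]
    have h1 : ∀ x : α × (Fin n → α),
        (∏ i, g i ((Fin.consEquiv (fun _ : Fin (n+1) => α)) x i))
          = g 0 x.1 * ∏ i : Fin n, g i.succ (x.2 i) := by
      intro x
      rw [Fin.prod_univ_succ]
      simp [Fin.consEquiv]
    rw [tsum_congr h1, ENNReal.tsum_prod']
    calc ∑' (a : α) (t : Fin n → α), g 0 a * ∏ i : Fin n, g i.succ (t i)
        = ∑' (a : α), g 0 a * ∑' t : Fin n → α, ∏ i : Fin n, g i.succ (t i) :=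
          tsum_congr fun a => ENNReal.tsum_mul_left
      _ = (∑' a : α, g 0 a) * ∑' t : Fin n → α, ∏ i : Fin n, g i.succ (t i) :=
          ENNReal.tsum_mul_right
      _ = ∏ i : Fin (n+1), ∑' a, g i a := by
          rw [ih, Fin.prod_univ_succ]

lemma summable_of_tsum_ofReal_ne_top {α : Type*} {g : α → ℝ} (hg : ∀ a, 0 ≤ g a)
    (h : ∑' a, ENNReal.ofReal (g a) ≠ ⊤) : Summable g :=
  (ENNReal.summable_toReal h).congr fun a => ENNReal.toReal_ofReal (hg a)

lemma tsum_eq_toReal_tsum_ofReal {α : Type*} {g : α → ℝ} (hg : ∀ a, 0 ≤ g a)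
    (h : ∑' a, ENNReal.ofReal (g a) ≠ ⊤) :
    ∑' a, g a = (∑' a, ENNReal.ofReal (g a)).toReal := by
  rw [← ENNReal.ofReal_tsum_of_nonneg hg (summable_of_tsum_ofReal_ne_top hg h),
    ENNReal.toReal_ofReal (tsum_nonneg hg)]

lemma tsum_le_of_tsum_ofReal_le {α : Type*} {g : α → ℝ} (hg : ∀ a, 0 ≤ g a) {r : ℝ}
    (hr : 0 ≤ r) (h : ∑' a, ENNReal.ofReal (g a) ≤ ENNReal.ofReal r) :
    ∑' a, g a ≤ r := by
  have hne : ∑' a, ENNReal.ofReal (g a) ≠ ⊤ :=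
    (lt_of_le_of_lt h ENNReal.ofReal_lt_top).ne
  rw [tsum_eq_toReal_tsum_ofReal hg hne]
  calc (∑' a, ENNReal.ofReal (g a)).toReal ≤ (ENNReal.ofReal r).toReal :=
        ENNReal.toReal_mono ENNReal.ofReal_ne_top h
    _ = r := ENNReal.toReal_ofReal hr

lemma binomP_nonneg {q : ℝ} (h0 : 0 ≤ q) (h1 : q ≤ 1) (n k : ℕ) : 0 ≤ binomP n q k := by
  unfold binomP
  have : 0 ≤ 1 - q := by linarith
  positivity

lemma tsum_ofReal_binomP (n : ℕ) {q : ℝ} (h0 : 0 ≤ q) (h1 : q ≤ 1) :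
    ∑' k : ℕ, ENNReal.ofReal (binomP n q k) = 1 := by
  rw [tsum_eq_sum (s := Finset.range (n + 1)) ?_]
  · rw [← ENNReal.ofReal_sum_of_nonneg (fun i _ => binomP_nonneg h0 h1 n i)]
    have hsum : ∑ k ∈ Finset.range (n + 1), binomP n q k = 1 := by
      rw [show (1:ℝ) = (q + (1-q)) ^ n by rw [add_sub_cancel, one_pow], add_pow]
      exact Finset.sum_congr rfl fun k _ => by unfold binomP; ring
    rw [hsum]; simp
  · intro k hk
    have hk' : n < k := by simpa using hk
    unfold binomP
    rw [Nat.choose_eq_zero_of_lt hk']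
    simp

lemma atomD_nonneg {δ : ℝ} (h0 : 0 < δ) (h1 : δ < 1) (M : ℕ) (b : Bool) (s : ℕ × ℕ) :
    0 ≤ atomD δ M b s := by
  have ha : (0:ℝ) ≤ 1 - δ := by linarith
  have hb : (1:ℝ) - δ ≤ 1 := by linarith
  unfold atomD
  cases b <;> simp <;> exact mul_nonneg (binomP_nonneg ha hb _ _) (binomP_nonneg ha hb _ _)

lemma tsum_ofReal_atomD {δ : ℝ} (h0 : 0 < δ) (h1 : δ < 1) (M : ℕ) (b : Bool) :
    ∑' s : ℕ × ℕ, ENNReal.ofReal (atomD δ M b s) = 1 := by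
  have ha : (0:ℝ) ≤ 1 - δ := by linarith
  have hb : (1:ℝ) - δ ≤ 1 := by linarith
  rw [ENNReal.tsum_prod']
  cases b <;>
  · simp only [atomD, if_true, if_false, Bool.false_eq_true]
    calc ∑' (x : ℕ) (y : ℕ), ENNReal.ofReal (binomP _ (1-δ) x * binomP _ (1-δ) y)
        = ∑' (x : ℕ) (y : ℕ),
            ENNReal.ofReal (binomP _ (1-δ) x) * ENNReal.ofReal (binomP _ (1-δ) y) :=
          tsum_congr fun x => tsum_congr fun y =>
            ENNReal.ofReal_mul (binomP_nonneg ha hb _ _)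
      _ = 1 := by
          rw [tsum_congr fun x =>
              ENNReal.tsum_mul_left (a := ENNReal.ofReal (binomP _ (1-δ) x)),
            ENNReal.tsum_mul_right, tsum_ofReal_binomP _ ha hb, tsum_ofReal_binomP _ ha hb,
            one_mul]

/-- The product measure of `M` atoms sums to 1 (in `ℝ≥0∞`). -/
lemma tsum_ofReal_prod_atomD {δ : ℝ} (h0 : 0 < δ) (h1 : δ < 1) (M : ℕ) (c : Bool) :
    ∑' t : Fin M → ℕ × ℕ, ENNReal.ofReal (∏ m, atomD δ M c (t m)) = 1 := by
  have he : ∀ t : Fin M → ℕ × ℕ,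
      ENNReal.ofReal (∏ m, atomD δ M c (t m)) = ∏ m, ENNReal.ofReal (atomD δ M c (t m)) :=
    fun t => ENNReal.ofReal_prod_of_nonneg fun i _ => atomD_nonneg h0 h1 M c (t i)
  rw [tsum_congr he, tsum_pi_prod M (fun _ x => ENNReal.ofReal (atomD δ M c x))]
  simp [tsum_ofReal_atomD h0 h1 M c]

/-- Key lemma: the total "MAP success mass" is at most `2(1-p)`. -/
lemma smax_le {δ : ℝ} (M : ℕ) {p : ℝ} (h0 : 0 < δ) (h1 : δ < 1) (hp : p < 1 / 2)
    (hopt : ∀ A : (Fin M → ℕ × ℕ) → Bool, p ≤ failProb δ M A) :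
    ∑' t : Fin M → ℕ × ℕ,
        max (ENNReal.ofReal (∏ m, atomD δ M false (t m)))
          (ENNReal.ofReal (∏ m, atomD δ M true (t m)))
      ≤ ENNReal.ofReal (2 * (1 - p)) := by
  classical
  set eP : Bool → (Fin M → ℕ × ℕ) → ℝ≥0∞ :=
    fun c t => ENNReal.ofReal (∏ m, atomD δ M c (t m)) with heP
  set Smax : ℝ≥0∞ := ∑' t, max (eP false t) (eP true t) with hSmax
  set Smin : ℝ≥0∞ := ∑' t, min (eP false t) (eP true t) with hSmin
  have hP1 : ∀ c, ∑' t, eP c t = 1 := fun c => tsum_ofReal_prod_atomD h0 h1 M c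
  have hadd : Smax + Smin = 2 := by
    rw [hSmax, hSmin, ← ENNReal.tsum_add]
    have hpt : ∀ t, max (eP false t) (eP true t) + min (eP false t) (eP true t)
        = eP false t + eP true t := by
      intro t
      rcases le_total (eP false t) (eP true t) with h | h
      · rw [max_eq_right h, min_eq_left h, add_comm]
      · rw [max_eq_left h, min_eq_right h]
    rw [tsum_congr hpt, ENNReal.tsum_add, hP1, hP1]
    norm_num
  have hSminle : Smin ≤ 2 := le_of_add_le_right hadd.le
  have hSmaxle2 : Smax ≤ 2 := le_of_add_le_left hadd.le
  have hSmin_ne : Smin ≠ ⊤ := (lt_of_le_of_lt hSminle (by norm_num)).ne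
  -- the MAP algorithm
  set A : (Fin M → ℕ × ℕ) → Bool :=
    fun t => decide ((∏ m, atomD δ M false (t m)) ≤ ∏ m, atomD δ M true (t m)) with hA
  have hmin_eq : ∀ t : Fin M → ℕ × ℕ,
      ENNReal.ofReal (min (∏ m, atomD δ M false (t m)) (∏ m, atomD δ M true (t m)))
        = min (eP false t) (eP true t) := by
    intro t
    rcases le_total ((∏ m, atomD δ M false (t m))) (∏ m, atomD δ M true (t m)) with h | h
    · rw [min_eq_left h, heP, min_eq_left (ENNReal.ofReal_le_ofReal h)]
    · rw [min_eq_right h, heP, min_eq_right (ENNReal.ofReal_le_ofReal h)]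
  have hminnn : ∀ t : Fin M → ℕ × ℕ,
      0 ≤ min (∏ m, atomD δ M false (t m)) (∏ m, atomD δ M true (t m)) :=
    fun t => le_min (Finset.prod_nonneg fun i _ => atomD_nonneg h0 h1 M false (t i))
      (Finset.prod_nonneg fun i _ => atomD_nonneg h0 h1 M true (t i))
  have hminsum : ∑' t : Fin M → ℕ × ℕ,
      ENNReal.ofReal (min (∏ m, atomD δ M false (t m)) (∏ m, atomD δ M true (t m))) = Smin :=
    tsum_congr hmin_eq
  have hfail : failProb δ M A
      = (1 / 2) * ∑' t : Fin M → ℕ × ℕ,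
          min (∏ m, atomD δ M false (t m)) (∏ m, atomD δ M true (t m)) := by
    unfold failProb
    congr 1
    refine tsum_congr fun t => ?_
    by_cases h : (∏ m, atomD δ M false (t m)) ≤ ∏ m, atomD δ M true (t m)
    · simp [hA, h, min_eq_left h]
    · simp [hA, h, min_eq_right (le_of_not_ge h)]
  have hreal : ∑' t : Fin M → ℕ × ℕ,
      min (∏ m, atomD δ M false (t m)) (∏ m, atomD δ M true (t m)) = Smin.toReal := by
    rw [tsum_eq_toReal_tsum_ofReal hminnn (by rw [hminsum]; exact hSmin_ne), hminsum]
  have h2p : 2 * p ≤ Smin.toReal := by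
    have := hopt A
    rw [hfail, hreal] at this
    linarith
  have hople : ENNReal.ofReal (2 * p) ≤ Smin := ENNReal.ofReal_le_of_le_toReal h2p
  rcases le_or_gt p 0 with hple | hpgt
  · calc Smax ≤ 2 := hSmaxle2
      _ = ENNReal.ofReal 2 := by norm_num
      _ ≤ ENNReal.ofReal (2 * (1 - p)) := ENNReal.ofReal_le_ofReal (by nlinarith)
  · have hne : ENNReal.ofReal (2 * p) ≠ ⊤ := ENNReal.ofReal_ne_top
    rw [← ENNReal.add_le_add_iff_right hne]
    calc Smax + ENNReal.ofReal (2 * p) ≤ Smax + Smin := add_le_add_right hople _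
      _ = 2 := hadd
      _ = ENNReal.ofReal (2 * (1 - p)) + ENNReal.ofReal (2 * p) := by
          rw [← ENNReal.ofReal_add (by nlinarith) (by nlinarith),
            show (2:ℝ) * (1 - p) + 2 * p = 2 by ring]
          norm_num

theorem stmt7 (δ : ℝ) (M B : ℕ) (p : ℝ) (hδ0 : 0 < δ) (hδ1 : δ < 1)
    (hp : p < 1 / 2)
    (hopt : ∀ A : (Fin M → ℕ × ℕ) → Bool, p ≤ failProb δ M A)
    (Ahat : (Fin M → Fin B → ℕ × ℕ) → (Fin B → Bool)) :
    ((2 : ℝ) ^ B)⁻¹ * ∑ z : Fin B → Bool, ∑' s : Fin M → Fin B → ℕ × ℕ,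
        (if Ahat s = z then ∏ m, ∏ b, atomD δ M (z b) (s m b) else 0)
      ≤ (1 - p) ^ B := by
  classical
  have hp1 : (0:ℝ) ≤ 1 - p := by linarith
  -- real-valued max function and its column product
  set Gr : (Fin M → ℕ × ℕ) → ℝ :=
    fun t => max (∏ m, atomD δ M false (t m)) (∏ m, atomD δ M true (t m)) with hGr
  set G : (Fin M → Fin B → ℕ × ℕ) → ℝ := fun s => ∏ b, Gr (fun m => s m b) with hG
  have hGrnn : ∀ t, 0 ≤ Gr t := fun t =>
    le_max_of_le_left (Finset.prod_nonneg fun i _ => atomD_nonneg hδ0 hδ1 M false (t i))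
  have hGnn : ∀ s, 0 ≤ G s := fun s => Finset.prod_nonneg fun b _ => hGrnn _
  -- the ENNReal sum of G factorizes
  have hofRealGr : ∀ t, ENNReal.ofReal (Gr t)
      = max (ENNReal.ofReal (∏ m, atomD δ M false (t m)))
          (ENNReal.ofReal (∏ m, atomD δ M true (t m))) := by
    intro t
    have hrfl : Gr t = max (∏ m, atomD δ M false (t m)) (∏ m, atomD δ M true (t m)) := rfl
    rw [hrfl]
    rcases le_total ((∏ m, atomD δ M false (t m))) (∏ m, atomD δ M true (t m)) with h | h
    · rw [max_eq_right h, max_eq_right (ENNReal.ofReal_le_ofReal h)]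
    · rw [max_eq_left h, max_eq_left (ENNReal.ofReal_le_ofReal h)]
  set Smax : ℝ≥0∞ := ∑' t : Fin M → ℕ × ℕ,
      max (ENNReal.ofReal (∏ m, atomD δ M false (t m)))
        (ENNReal.ofReal (∏ m, atomD δ M true (t m))) with hSmax
  have hGsum : ∑' s : Fin M → Fin B → ℕ × ℕ, ENNReal.ofReal (G s) = Smax ^ B := by
    have he : ∀ s : Fin M → Fin B → ℕ × ℕ, ENNReal.ofReal (G s)
        = ∏ b, ENNReal.ofReal (Gr (fun m => s m b)) := fun s =>
      ENNReal.ofReal_prod_of_nonneg fun b _ => hGrnn _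
    rw [tsum_congr he]
    rw [← (Equiv.piComm (fun (_ : Fin B) (_ : Fin M) => (ℕ × ℕ))).tsum_eq]
    have he2 : ∀ u : Fin B → Fin M → ℕ × ℕ,
        (∏ b, ENNReal.ofReal (Gr (fun m =>
          (Equiv.piComm (fun (_ : Fin B) (_ : Fin M) => (ℕ × ℕ))) u m b)))
          = ∏ b, ENNReal.ofReal (Gr (u b)) := fun u => rfl
    rw [tsum_congr he2, tsum_pi_prod B (fun _ t => ENNReal.ofReal (Gr t))]
    rw [Finset.prod_const, Finset.card_univ, Fintype.card_fin]
    refine congrArg (· ^ B) ?_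
    exact tsum_congr hofRealGr
  have hSmaxle : Smax ≤ ENNReal.ofReal (2 * (1 - p)) := smax_le M hδ0 hδ1 hp hopt
  have hGle : ∑' s : Fin M → Fin B → ℕ × ℕ, ENNReal.ofReal (G s)
      ≤ ENNReal.ofReal ((2 * (1 - p)) ^ B) := by
    rw [hGsum, ENNReal.ofReal_pow (by nlinarith)]
    exact pow_le_pow_left' hSmaxle B
  have hGne : ∑' s : Fin M → Fin B → ℕ × ℕ, ENNReal.ofReal (G s) ≠ ⊤ :=
    (lt_of_le_of_lt hGle ENNReal.ofReal_lt_top).ne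
  have hGsummable : Summable G := summable_of_tsum_ofReal_ne_top hGnn hGne
  have hGtsum : ∑' s : Fin M → Fin B → ℕ × ℕ, G s ≤ (2 * (1 - p)) ^ B :=
    tsum_le_of_tsum_ofReal_le hGnn (by positivity) hGle
  -- pointwise bound on the indicator terms
  have hFle : ∀ (z : Fin B → Bool) (s : Fin M → Fin B → ℕ × ℕ),
      (if Ahat s = z then ∏ m, ∏ b, atomD δ M (z b) (s m b) else 0) ≤ G s := by
    intro z s
    split_ifs with h
    · rw [Finset.prod_comm]
      refine Finset.prod_le_prod
        (fun b _ => Finset.prod_nonneg fun m _ => atomD_nonneg hδ0 hδ1 M _ _) (fun b _ => ?_)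
      have hrfl : Gr (fun m => s m b)
          = max (∏ m, atomD δ M false (s m b)) (∏ m, atomD δ M true (s m b)) := rfl
      rw [hrfl]
      cases z b
      · exact le_max_left _ _
      · exact le_max_right _ _
    · exact hGnn s
  have hFnn : ∀ (z : Fin B → Bool) (s : Fin M → Fin B → ℕ × ℕ),
      0 ≤ (if Ahat s = z then ∏ m, ∏ b, atomD δ M (z b) (s m b) else 0) := by
    intro z s
    split_ifs
    · exact Finset.prod_nonneg fun m _ => Finset.prod_nonneg fun b _ =>
        atomD_nonneg hδ0 hδ1 M _ _
    · exact le_refl 0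
  have hFsummable : ∀ z : Fin B → Bool,
      Summable (fun s : Fin M → Fin B → ℕ × ℕ =>
        (if Ahat s = z then ∏ m, ∏ b, atomD δ M (z b) (s m b) else 0)) :=
    fun z => Summable.of_nonneg_of_le (hFnn z) (hFle z) hGsummable
  rw [← Summable.tsum_finsetSum (fun z _ => hFsummable z)]
  have hpt : ∀ s : Fin M → Fin B → ℕ × ℕ,
      (∑ z : Fin B → Bool, if Ahat s = z then ∏ m, ∏ b, atomD δ M (z b) (s m b) else 0)
        ≤ G s := by
    intro s
    rw [Finset.sum_ite_eq Finset.univ (Ahat s)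
      (fun z => ∏ m, ∏ b, atomD δ M (z b) (s m b))]
    simp only [Finset.mem_univ, if_true]
    have := hFle (Ahat s) s
    rwa [if_pos rfl] at this
  have hsum_le : (∑' s : Fin M → Fin B → ℕ × ℕ,
      ∑ z : Fin B → Bool, if Ahat s = z then ∏ m, ∏ b, atomD δ M (z b) (s m b) else 0)
        ≤ (2 * (1 - p)) ^ B := by
    refine le_trans (Summable.tsum_le_tsum hpt ?_ hGsummable) hGtsum
    exact summable_sum fun z _ => hFsummable z
  calc ((2 : ℝ) ^ B)⁻¹ * _ ≤ ((2 : ℝ) ^ B)⁻¹ * (2 * (1 - p)) ^ B := by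
        exact mul_le_mul_of_nonneg_left hsum_le (by positivity)
    _ = (1 - p) ^ B := by
        rw [mul_pow, ← mul_assoc, inv_mul_cancel₀ (by positivity), one_mul]
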